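/- Let H : ℝ → ℝ be even, integrable, and monotonically decreasing on (0,∞). If f : ℝ → ℝ is bounded, integrable, satisfies f(x) ≥ 0 for x ≥ λ and f(x) = −f(2λ − x) for all x (odd with respect to λ), then (H ∗ f)(x) ≥ 0 for all x ≥ λ. -/

import Mathlib

open Real MeasureTheory Set

/-- Convolution of an even kernel, decreasing on (0,∞), with a function that is odd
about λ and nonnegative on [λ,∞), is nonnegative on [λ,∞). -/
theorem conv_nonneg_halfline (H f : ℝ → ℝ) (lam : ℝ)
    (hHeven : ∀ x : ℝ, H x = H (-x))
    (hHint : MeasureTheory.Integrable H)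
    (hHmono : ∀ s t : ℝ, 0 < s → s < t → H t ≤ H s)
    (hfbdd : ∃ C : ℝ, ∀ x : ℝ, |f x| ≤ C)
    (hfint : MeasureTheory.Integrable f)
    (hfpos : ∀ x : ℝ, lam ≤ x → 0 ≤ f x)
    (hfodd : ∀ x : ℝ, f x = -f (2 * lam - x)) :
    ∀ x : ℝ, lam ≤ x → 0 ≤ ∫ y : ℝ, H (x - y) * f y := by
  obtain ⟨C, hC⟩ := hfbdd
  intro x hx
  -- integrability of the integrand and of its reflection
  have hfm : AEStronglyMeasurable f (volume : Measure ℝ) := hfint.1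
  have hInt : ∀ a : ℝ, Integrable (fun y : ℝ => H (a - y) * f y) := by
    intro a
    have h1 : Integrable (fun y : ℝ => H (a - y)) := hHint.comp_sub_left a
    have h2 := h1.bdd_mul hfm (c := C) (Filter.Eventually.of_forall fun y => by simpa using hC y)
    simpa [mul_comm] using h2
  have hIntRefl : Integrable (fun y : ℝ => H (x - (2 * lam - y)) * f (2 * lam - y)) := by
    have hmp := Measure.measurePreserving_sub_left (volume : Measure ℝ) (2 * lam)
    have hemb := (MeasurableEquiv.subLeft (2 * lam)).measurableEmbedding
    have : Integrable ((fun y : ℝ => H (x - y) * f y) ∘ (fun y : ℝ => 2 * lam - y)) :=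
      (hmp.integrable_comp_emb hemb).2 (hInt x)
    simpa [Function.comp_def] using this
  -- reflection identity
  have hrefl : (∫ y in Iio lam, H (x - y) * f y) =
      ∫ y in Ioi lam, H (x - (2 * lam - y)) * f (2 * lam - y) := by
    have hemb := (MeasurableEquiv.subLeft (2 * lam)).measurableEmbedding
    have hmp := Measure.measurePreserving_sub_left (volume : Measure ℝ) (2 * lam)
    have := hmp.setIntegral_preimage_emb hemb (fun y => H (x - y) * f y) (Iio lam)
    have hset : (fun y : ℝ => 2 * lam - y) ⁻¹' (Iio lam) = Ioi lam := by
      ext y; simp [mem_preimage, mem_Iio, mem_Ioi]; constructor <;> intro h <;> linarith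
    rw [← this]
    have : ((MeasurableEquiv.subLeft (2 * lam) : ℝ → ℝ)) = fun y : ℝ => 2 * lam - y := rfl
    simp only [MeasurableEquiv.subLeft, Equiv.subLeft] at *
    rw [show ((fun y : ℝ => 2 * lam - y) ⁻¹' (Iio lam)) = Ioi lam from hset]
  -- split the integral
  have hsplit : (∫ y : ℝ, H (x - y) * f y) =
      (∫ y in Iio lam, H (x - y) * f y) + ∫ y in Ici lam, H (x - y) * f y := by
    rw [← intervalIntegral.integral_Iio_add_Ici ((hInt x).integrableOn) ((hInt x).integrableOn)]
  have hIci : (∫ y in Ici lam, H (x - y) * f y) = ∫ y in Ioi lam, H (x - y) * f y :=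
    integral_Ici_eq_integral_Ioi
  rw [hsplit, hrefl, hIci, ← integral_add hIntRefl.integrableOn (hInt x).integrableOn]
  -- nonnegativity of the combined integrand a.e. on (lam, ∞)
  refine setIntegral_nonneg_of_ae_restrict ?_
  have hne : ∀ᵐ y : ℝ, y ≠ x := by
    rw [ae_iff]
    simp [measure_singleton]
  filter_upwards [ae_restrict_mem measurableSet_Ioi, ae_restrict_of_ae hne] with y hy hyx
  have hylam : lam < y := hy
  have hfodd' : f (2 * lam - y) = -f y := by
    rw [hfodd (2 * lam - y)]; ring_nf
  simp only [Pi.zero_apply]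
  have hfy : 0 ≤ f y := hfpos y hylam.le
  have hle : H (x - (2 * lam - y)) ≤ H (x - y) := by
    have hxy : H (x - y) = H (|x - y|) := by
      rcases abs_cases (x - y) with ⟨h, _⟩ | ⟨h, _⟩
      · rw [h]
      · rw [h, ← hHeven]
    have harg : x - (2 * lam - y) = x + y - 2 * lam := by ring
    rw [hxy, harg]
    have hs : 0 < |x - y| := by
      rw [abs_pos, sub_ne_zero]
      exact fun h => hyx h.symm
    have hst : |x - y| ≤ x + y - 2 * lam := by
      rcases abs_cases (x - y) with ⟨h, _⟩ | ⟨h, _⟩ <;> rw [h] <;> linarith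
    rcases eq_or_lt_of_le hst with h | h
    · rw [← h]
    · exact hHmono _ _ hs h
  rw [hfodd']
  nlinarith [mul_le_mul_of_nonneg_right hle hfy]
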